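/- Let f : Σ* → ℚ, let R = [r_1,…,r_m] and C = [c_1,…,c_n] be finite sequences of words, and let d ∈ ℕ. If the m×(d+1)n matrix A(R,C,d) has full row rank (rank m), then the table H(R,C) is d-closed: for every σ ∈ Σ there exists a matrix M_σ(x) ∈ ℚ[x]^{n×n} whose entries all have degree at most d such that row_C(rσ) = row_C(r)·M_σ(|r|+1) for every r ∈ R. -/

import Mathlib

open Polynomial Matrix


/-- The row of the table `H(R,C)` associated to a word `w`:
`row_C(w) = (f(w c₁), …, f(w cₙ))`. -/
noncomputable def tableRow {S : Type*} (f : List S → ℚ) {n : ℕ} (C : Fin n → List S)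
    (w : List S) : Fin n → ℚ := fun j => f (w ++ C j)

/-- The matrix `A(R,C,d) = [Δ⁰H(R,C) | Δ¹H(R,C) | ⋯ | ΔᵈH(R,C)]`, an
`m × (d+1)n` matrix with columns indexed by `Fin (d+1) × Fin n`, where
`Δ = diag(|r₁|+1, …, |rₘ|+1)` and `H(R,C)ᵢⱼ = f(rᵢcⱼ)`. -/
noncomputable def tableA {S : Type*} (f : List S → ℚ) {m n : ℕ}
    (R : Fin m → List S) (C : Fin n → List S) (d : ℕ) :
    Matrix (Fin m) (Fin (d + 1) × Fin n) ℚ :=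
  fun i p => ((R i).length + 1 : ℚ) ^ (p.1 : ℕ) * f (R i ++ C p.2)

/-- If the `m × (d+1)n` matrix `A(R,C,d)` has full row rank `m`,
then the table `H(R,C)` is `d`-closed: for every `σ` there is a matrix
`M_σ(x) ∈ ℚ[x]^{n×n}` with entries of degree at most `d` such that
`row_C(rσ) = row_C(r)·M_σ(|r|+1)` for every `r ∈ R`. -/
theorem full_row_rank_implies_d_closed
    {S : Type*} [Fintype S] (f : List S → ℚ) (m n d : ℕ)
    (R : Fin m → List S) (C : Fin n → List S)
    (hrank : (tableA f R C d).rank = m) :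
    ∀ σ : S, ∃ M : Matrix (Fin n) (Fin n) (Polynomial ℚ),
      (∀ i j, (M i j).natDegree ≤ d) ∧
      ∀ i : Fin m,
        Matrix.vecMul (tableRow f C (R i))
            (M.map (Polynomial.eval (((R i).length : ℚ) + 1)))
          = tableRow f C (R i ++ [σ]) := by
  have hsurj : Function.Surjective (tableA f R C d).mulVecLin := by
    rw [← LinearMap.range_eq_top]
    apply Submodule.eq_top_of_finrank_eq
    rw [show Module.finrank ℚ (LinearMap.range (tableA f R C d).mulVecLin)
        = (tableA f R C d).rank from rfl, hrank]
    simp [Module.finrank_pi]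
  intro σ
  choose y hy using fun j => hsurj (fun i => f ((R i ++ [σ]) ++ C j))
  refine ⟨fun j' j => ∑ k : Fin (d+1), Polynomial.C (y j (k, j')) * Polynomial.X ^ (k:ℕ),
    fun j' j => Polynomial.natDegree_sum_le_of_forall_le _ _ fun k _ =>
      (Polynomial.natDegree_C_mul_X_pow_le _ _).trans (Nat.lt_succ_iff.mp k.2), ?_⟩
  intro i
  funext j
  have h := congrFun (hy j) i
  simp only [Matrix.mulVecLin_apply, Matrix.mulVec, dotProduct, tableA,
    Fintype.sum_prod_type] at h
  simp only [Matrix.vecMul, dotProduct, tableRow, Matrix.map_apply, Polynomial.eval_finset_sum,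
    Polynomial.eval_mul, Polynomial.eval_C, Polynomial.eval_pow, Polynomial.eval_X,
    Finset.mul_sum]
  simp only [Matrix.map, Matrix.of_apply, Polynomial.eval_finset_sum, Polynomial.eval_mul,
    Polynomial.eval_C, Polynomial.eval_pow, Polynomial.eval_X, Finset.mul_sum]
  simp only [List.append_assoc] at h ⊢
  rw [← h, Finset.sum_comm]
  exact Finset.sum_congr rfl fun k _ => Finset.sum_congr rfl fun j' _ => by ring
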